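/- The robustness of the three-qubit W state relative to the fully separable states equals 2: R_FS(|W⟩⟨W|) = 2, where |W⟩ = (|001⟩+|010⟩+|100⟩)/√3 in (ℂ²)^{⊗3}. -/

import Mathlib

open Matrix Finset
open scoped ComplexOrder

attribute [local instance] Classical.propDecidable

noncomputable section

/-- The rank-one matrix `|v⟩⟨v|` associated to a vector `v`. -/
def vecProj {D : Type*} [Fintype D] (v : D → ℂ) : Matrix D D ℂ :=
  Matrix.of fun i j => v i * star (v j)

/-- `v` is a unit vector. -/
def UnitVec {D : Type*} [Fintype D] (v : D → ℂ) : Prop :=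
  ∑ i, star (v i) * v i = 1

/-- A quantum state: positive semidefinite matrix of trace one. -/
def IsState {D : Type*} [Fintype D] [DecidableEq D] (ρ : Matrix D D ℂ) : Prop :=
  ρ.PosSemidef ∧ ρ.trace = 1

/-- A vector on a multipartite system is fully product if it is a tensor product of
single-party vectors. -/
def IsProdVec {ι : Type*} [Fintype ι] {Idx : ι → Type*} (v : (∀ i, Idx i) → ℂ) : Prop :=
  ∃ ψ : ∀ i, Idx i → ℂ, ∀ f, v f = ∏ i, ψ i (f i)

/-- A vector on a multipartite system is biseparable if it is a product across some
bipartition of the parties into a nonempty proper subset `M` and its complement. -/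
def IsBisepVec {ι : Type*} [Fintype ι] {Idx : ι → Type*} (v : (∀ i, Idx i) → ℂ) : Prop :=
  ∃ M : Finset ι, M.Nonempty ∧ M ≠ Finset.univ ∧
    ∃ (a : ((j : {j : ι // j ∈ M}) → Idx j.1) → ℂ)
      (b : ((j : {j : ι // j ∉ M}) → Idx j.1) → ℂ),
      ∀ f, v f = a (fun j => f j.1) * b (fun j => f j.1)

/-- Fully separable states: finite convex combinations of fully product pure states. -/
def FullySepState {ι : Type*} [Fintype ι] [DecidableEq ι] (Idx : ι → Type*)
    [∀ i, Fintype (Idx i)] (ρ : Matrix (∀ i, Idx i) (∀ i, Idx i) ℂ) : Prop :=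
  ∃ (m : ℕ) (w : Fin m → ℝ) (u : Fin m → (∀ i, Idx i) → ℂ),
    (∀ k, 0 ≤ w k) ∧ (∑ k, w k = 1) ∧
    (∀ k, UnitVec (u k) ∧ IsProdVec (u k)) ∧
    ρ = ∑ k, (w k : ℂ) • vecProj (u k)

/-- Biseparable states: finite convex combinations of biseparable pure states. -/
def BisepState {ι : Type*} [Fintype ι] [DecidableEq ι] (Idx : ι → Type*)
    [∀ i, Fintype (Idx i)] (ρ : Matrix (∀ i, Idx i) (∀ i, Idx i) ℂ) : Prop :=
  ∃ (m : ℕ) (w : Fin m → ℝ) (u : Fin m → (∀ i, Idx i) → ℂ),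
    (∀ k, 0 ≤ w k) ∧ (∑ k, w k = 1) ∧
    (∀ k, UnitVec (u k) ∧ IsBisepVec (u k)) ∧
    ρ = ∑ k, (w k : ℂ) • vecProj (u k)

/-- Robustness of `ρ` relative to the set `S`: the least `s ≥ 0` such that mixing `ρ`
with some state `σ ∈ S` with weight `s` (normalised) lands in `S`. -/
def Robustness {D : Type*} [Fintype D] [DecidableEq D]
    (S : Set (Matrix D D ℂ)) (ρ : Matrix D D ℂ) : ℝ :=
  sInf {s : ℝ | 0 ≤ s ∧ ∃ σ, IsState σ ∧ σ ∈ S ∧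
    (((1 + s)⁻¹ : ℝ) : ℂ) • (ρ + (s : ℂ) • σ) ∈ S}

/-- The three-qubit GHZ vector `(|000⟩ + |111⟩)/√2`. -/
def ghzVec : (Fin 3 → Fin 2) → ℂ := fun f =>
  if f = (fun _ => (0 : Fin 2)) ∨ f = (fun _ => (1 : Fin 2)) then
    (((Real.sqrt 2)⁻¹ : ℝ) : ℂ) else 0

/-- The three-qubit W vector `(|001⟩ + |010⟩ + |100⟩)/√3`. -/
def wVec : (Fin 3 → Fin 2) → ℂ := fun f =>
  if (∑ i, ((f i : ℕ))) = 1 then (((Real.sqrt 3)⁻¹ : ℝ) : ℂ) else 0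


/-! ### Auxiliary material for the proof -/

section RWAux

open Complex

/-- `√3` as a complex number. -/
def crt : ℂ := ((Real.sqrt 3 : ℝ) : ℂ)

lemma crt_sq : crt ^ 2 = 3 := by
  rw [crt, ← Complex.ofReal_pow, Real.sq_sqrt (by norm_num : (0:ℝ) ≤ 3)]
  norm_num

lemma crt_mul : crt * crt = 3 := by
  have := crt_sq; rwa [pow_two] at this

lemma crt_ne : crt ≠ 0 := by
  intro h
  have := crt_mul
  rw [h] at this
  norm_num at this

lemma crt_p3 : crt ^ 3 = 3 * crt := by
  rw [pow_succ, crt_sq]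

lemma crt_p4 : crt ^ 4 = 9 := by
  rw [show (4:ℕ) = 2*2 from rfl, pow_mul, crt_sq]; norm_num

lemma crt_p5 : crt ^ 5 = 9 * crt := by
  rw [pow_succ, crt_p4]

lemma crt_p6 : crt ^ 6 = 27 := by
  rw [pow_succ, crt_p5, mul_assoc, crt_mul]; norm_num

lemma conj_two : (starRingEnd ℂ) (2:ℂ) = 2 := by
  have : ((2:ℝ):ℂ) = (2:ℂ) := by norm_num
  rw [← this, Complex.conj_ofReal]

lemma conj_crt : (starRingEnd ℂ) crt = crt := by rw [crt, Complex.conj_ofReal]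

lemma inv_sqrt3 : (((Real.sqrt 3)⁻¹ : ℝ) : ℂ) = crt / 3 := by
  rw [Complex.ofReal_inv]
  show crt⁻¹ = crt / 3
  field_simp [crt_ne]
  linear_combination (-1 : ℂ) * crt_sq

/-- Concrete basis points of `Fin 3 → Fin 2`. -/
def q0 : Fin 3 → Fin 2 := ![0,0,0]
def q7 : Fin 3 → Fin 2 := ![1,1,1]
def qA : Fin 3 → Fin 2 := ![1,0,0]
def qB : Fin 3 → Fin 2 := ![0,1,0]
def qC : Fin 3 → Fin 2 := ![0,0,1]
def qE : Fin 3 → Fin 2 := ![0,1,1]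
def qF : Fin 3 → Fin 2 := ![1,0,1]
def qG : Fin 3 → Fin 2 := ![1,1,0]

/-- An explicit equivalence used to expand sums over `Fin 3 → Fin 2`. -/
def pe3 : (Fin 2 × Fin 2 × Fin 2) ≃ (Fin 3 → Fin 2) where
  toFun p := ![p.1, p.2.1, p.2.2]
  invFun f := (f 0, f 1, f 2)
  left_inv := by rintro ⟨a, b, c⟩; rfl
  right_inv := by
    intro f; funext i; fin_cases i <;> simp

lemma sum_pi3 {M : Type*} [AddCommMonoid M] (F : (Fin 3 → Fin 2) → M) :
    ∑ f, F f = ∑ a : Fin 2, ∑ b : Fin 2, ∑ c : Fin 2, F ![a,b,c] := by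
  rw [← Equiv.sum_comp pe3 F]
  rw [Fintype.sum_prod_type]
  refine Finset.sum_congr rfl fun a _ => ?_
  rw [Fintype.sum_prod_type]
  simp [pe3]

/-- The entanglement-witness functional for the W state. -/
def Fw (M : Matrix (Fin 3 → Fin 2) (Fin 3 → Fin 2) ℂ) : ℝ :=
  (M q0 q0
    + (M qE qE + M qE qF + M qE qG + M qF qE + M qF qF + M qF qG
        + M qG qE + M qG qF + M qG qG)
    - (M qA qA + M qA qB + M qA qC + M qB qA + M qB qB + M qB qC
        + M qC qA + M qC qB + M qC qC)
    + (M qA qA + M qB qB + M qC qC)).re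

lemma Fw_add (M N : Matrix (Fin 3 → Fin 2) (Fin 3 → Fin 2) ℂ) :
    Fw (M + N) = Fw M + Fw N := by
  simp only [Fw, Matrix.add_apply]
  simp [Complex.add_re, Complex.sub_re]
  ring

lemma Fw_zero : Fw 0 = 0 := by simp [Fw]

lemma Fw_smul (r : ℝ) (M : Matrix (Fin 3 → Fin 2) (Fin 3 → Fin 2) ℂ) :
    Fw ((r : ℂ) • M) = r * Fw M := by
  simp only [Fw, Matrix.smul_apply, smul_eq_mul]
  simp only [← mul_add, ← mul_sub]
  rw [Complex.re_ofReal_mul]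

lemma Fw_sum {n : ℕ} (M : Fin n → Matrix (Fin 3 → Fin 2) (Fin 3 → Fin 2) ℂ) :
    Fw (∑ k, M k) = ∑ k, Fw (M k) := by
  classical
  induction (Finset.univ : Finset (Fin n)) using Finset.induction with
  | empty => simp [Fw_zero]
  | insert _ _ h ih => rw [Finset.sum_insert h, Fw_add, ih, Finset.sum_insert h]

/-- The key inequality. -/
lemma rw_key (a b c d m : ℂ) (h : a*b + a*c + b*c = d*m) :
    Complex.normSq (a+b+c) ≤
      Complex.normSq a + Complex.normSq b + Complex.normSq c
        + Complex.normSq d + Complex.normSq m := by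
  have h2 : (a+b+c)^2 = (a^2 + b^2 + c^2) + 2*(d*m) := by linear_combination (2:ℂ) * h
  have e1 : Complex.normSq (a+b+c) = ‖(a+b+c)^2‖ := by
    rw [norm_pow, Complex.sq_norm]
  have t1 : ‖(a^2+b^2+c^2) + 2*(d*m)‖
      ≤ ‖a^2+b^2+c^2‖ + ‖2*(d*m)‖ := norm_add_le _ _
  have t2 : ‖a^2+b^2+c^2‖ ≤ ‖a^2+b^2‖ + ‖c^2‖ :=
    norm_add_le _ _
  have t3 : ‖a^2+b^2‖ ≤ ‖a^2‖ + ‖b^2‖ :=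
    norm_add_le _ _
  have ea : ‖a^2‖ = Complex.normSq a := by rw [norm_pow, Complex.sq_norm]
  have eb : ‖b^2‖ = Complex.normSq b := by rw [norm_pow, Complex.sq_norm]
  have ec : ‖c^2‖ = Complex.normSq c := by rw [norm_pow, Complex.sq_norm]
  have t4 : ‖2*(d*m)‖ = 2 * (‖d‖ * ‖m‖) := by
    rw [show (2*(d*m) : ℂ) = 2*d*m by ring, norm_mul, norm_mul, Complex.norm_two]
    ring
  have t5 : 2 * (‖d‖ * ‖m‖)
      ≤ ‖d‖ ^ 2 + ‖m‖ ^ 2 := by nlinarith [sq_nonneg (‖d‖ - ‖m‖)]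
  have ed : ‖d‖ ^ 2 = Complex.normSq d := Complex.sq_norm d
  have em : ‖m‖ ^ 2 = Complex.normSq m := Complex.sq_norm m
  rw [e1, h2]
  linarith


lemma vecProj_posSemidef {D : Type*} [Fintype D] [DecidableEq D] (v : D → ℂ) :
    (vecProj v).PosSemidef := by
  rw [Matrix.posSemidef_iff_dotProduct_mulVec]
  constructor
  · show (vecProj v)ᴴ = vecProj v
    ext i j
    simp [vecProj, Matrix.conjTranspose_apply, star_mul', mul_comm]
  · intro x
    have hcalc : dotProduct (star x) ((vecProj v) *ᵥ x)
        = (∑ i, star (x i) * v i) * star (∑ i, star (x i) * v i) := by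
      simp only [dotProduct, Matrix.mulVec, vecProj, Matrix.of_apply, dotProduct,
        Pi.star_apply, star_sum, star_mul', star_star, Finset.mul_sum, Finset.sum_mul]
      rw [Finset.sum_comm]
      refine Finset.sum_congr rfl fun i _ => Finset.sum_congr rfl fun j _ => by ring
    rw [hcalc]
    exact mul_star_self_nonneg _

lemma trace_vecProj {D : Type*} [Fintype D] [DecidableEq D] (v : D → ℂ) (h : UnitVec v) :
    (vecProj v).trace = 1 := by
  have : (vecProj v).trace = ∑ i, v i * star (v i) := by
    simp [Matrix.trace, Matrix.diag, vecProj]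
  rw [this, ← h]
  exact Finset.sum_congr rfl fun i _ => by ring

lemma posSemidef_ofReal_smul {D : Type*} [Fintype D] [DecidableEq D] {w : ℝ} (hw : 0 ≤ w)
    {M : Matrix D D ℂ} (h : M.PosSemidef) : ((w : ℂ) • M).PosSemidef := by
  rw [Matrix.posSemidef_iff_dotProduct_mulVec]
  constructor
  · show ((w : ℂ) • M)ᴴ = (w : ℂ) • M
    ext i j
    show star ((w : ℂ) * M j i) = (w : ℂ) * M i j
    rw [star_mul', show star ((w : ℂ)) = ((w : ℂ)) from by
      rw [Complex.star_def, Complex.conj_ofReal], h.1.apply i j]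
  · intro x
    rw [Matrix.smul_mulVec, dotProduct_smul, smul_eq_mul]
    exact mul_nonneg (by rw [Complex.le_def]; simp [hw]) (h.dotProduct_mulVec_nonneg x)

lemma posSemidef_sum {D : Type*} [Fintype D] [DecidableEq D] {n : ℕ}
    (M : Fin n → Matrix D D ℂ) (h : ∀ k, (M k).PosSemidef) : (∑ k, M k).PosSemidef := by
  classical
  induction (Finset.univ : Finset (Fin n)) using Finset.induction with
  | empty => simpa using (Matrix.PosSemidef.zero : (0 : Matrix D D ℂ).PosSemidef)
  | insert _ _ hne ih =>
      rw [Finset.sum_insert hne]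
      exact (h _).add ih

lemma isState_mix {D : Type*} [Fintype D] [DecidableEq D] {n : ℕ} (w : Fin n → ℝ)
    (u : Fin n → D → ℂ) (hw : ∀ k, 0 ≤ w k) (hw1 : ∑ k, w k = 1)
    (hu : ∀ k, UnitVec (u k)) :
    IsState (∑ k, (w k : ℂ) • vecProj (u k)) := by
  constructor
  · exact posSemidef_sum _ fun k => posSemidef_ofReal_smul (hw k) (vecProj_posSemidef (u k))
  · have h1 : (∑ k, (w k : ℂ) • vecProj (u k)).trace
        = ∑ k, (w k : ℂ) * (vecProj (u k)).trace := by
      rw [Matrix.trace_sum]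
      exact Finset.sum_congr rfl fun k _ => by rw [Matrix.trace_smul]; rfl
    rw [h1]
    have h2 : ∀ k ∈ Finset.univ, (w k : ℂ) * (vecProj (u k)).trace = ((w k : ℝ) : ℂ) := by
      intro k _; rw [trace_vecProj _ (hu k), mul_one]
    rw [Finset.sum_congr rfl h2, ← Complex.ofReal_sum, hw1, Complex.ofReal_one]

lemma star_mul_self_eq_normSq (z : ℂ) : star z * z = (Complex.normSq z : ℂ) := by
  rw [Complex.star_def, mul_comm, Complex.mul_conj]

/-- Value of `Fw` on the projector of a product unit vector lies in `[0,1]`. -/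
lemma Fw_prod_bounds (u : (Fin 3 → Fin 2) → ℂ) (hu : UnitVec u) (hp : IsProdVec u) :
    0 ≤ Fw (vecProj u) ∧ Fw (vecProj u) ≤ 1 := by
  obtain ⟨ψ, hψ⟩ := hp
  have hval : ∀ f, u f = ψ 0 (f 0) * ψ 1 (f 1) * ψ 2 (f 2) := fun f => by
    rw [hψ, Fin.prod_univ_three]
  have hA : u qA = ψ 0 1 * ψ 1 0 * ψ 2 0 := by rw [hval]; rfl
  have hB : u qB = ψ 0 0 * ψ 1 1 * ψ 2 0 := by rw [hval]; rfl
  have hC : u qC = ψ 0 0 * ψ 1 0 * ψ 2 1 := by rw [hval]; rfl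
  have hD : u q0 = ψ 0 0 * ψ 1 0 * ψ 2 0 := by rw [hval]; rfl
  have hE : u qE = ψ 0 0 * ψ 1 1 * ψ 2 1 := by rw [hval]; rfl
  have hF : u qF = ψ 0 1 * ψ 1 0 * ψ 2 1 := by rw [hval]; rfl
  have hG : u qG = ψ 0 1 * ψ 1 1 * ψ 2 0 := by rw [hval]; rfl
  have hH : u q7 = ψ 0 1 * ψ 1 1 * ψ 2 1 := by rw [hval]; rfl
  -- the Fw value in closed form
  have hFw : Fw (vecProj u) = Complex.normSq (u q0) + Complex.normSq (u qE + u qF + u qG)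
      + (Complex.normSq (u qA) + Complex.normSq (u qB) + Complex.normSq (u qC))
      - Complex.normSq (u qA + u qB + u qC) := by
    simp only [Fw, vecProj, Matrix.of_apply]
    have expand : u q0 * star (u q0)
        + (u qE * star (u qE) + u qE * star (u qF) + u qE * star (u qG)
          + u qF * star (u qE) + u qF * star (u qF) + u qF * star (u qG)
          + u qG * star (u qE) + u qG * star (u qF) + u qG * star (u qG))
        - (u qA * star (u qA) + u qA * star (u qB) + u qA * star (u qC)
          + u qB * star (u qA) + u qB * star (u qB) + u qB * star (u qC)
          + u qC * star (u qA) + u qC * star (u qB) + u qC * star (u qC))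
        + (u qA * star (u qA) + u qB * star (u qB) + u qC * star (u qC))
        = (Complex.normSq (u q0) : ℂ) + (Complex.normSq (u qE + u qF + u qG) : ℂ)
          + ((Complex.normSq (u qA) : ℂ) + (Complex.normSq (u qB) : ℂ)
              + (Complex.normSq (u qC) : ℂ))
          - (Complex.normSq (u qA + u qB + u qC) : ℂ) := by
      rw [← Complex.mul_conj (u q0), ← Complex.mul_conj (u qE + u qF + u qG),
        ← Complex.mul_conj (u qA), ← Complex.mul_conj (u qB), ← Complex.mul_conj (u qC),
        ← Complex.mul_conj (u qA + u qB + u qC)]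
      simp only [Complex.star_def, map_add]
      ring
    rw [expand]
    simp [Complex.add_re, Complex.sub_re, Complex.ofReal_re]
  -- the two algebraic relations
  have rel1 : u qA * u qB + u qA * u qC + u qB * u qC = u q0 * (u qE + u qF + u qG) := by
    rw [hA, hB, hC, hD, hE, hF, hG]; ring
  have rel2 : u qE * u qF + u qE * u qG + u qF * u qG = u q7 * (u qA + u qB + u qC) := by
    rw [hA, hB, hC, hE, hF, hG, hH]; ring
  have key1 := rw_key (u qA) (u qB) (u qC) (u q0) (u qE + u qF + u qG) rel1
  have key2 := rw_key (u qE) (u qF) (u qG) (u q7) (u qA + u qB + u qC) rel2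
  -- unit norm in expanded form
  have hu8 : Complex.normSq (u q0) + Complex.normSq (u qA) + Complex.normSq (u qB)
      + Complex.normSq (u qC) + Complex.normSq (u qE) + Complex.normSq (u qF)
      + Complex.normSq (u qG) + Complex.normSq (u q7) = 1 := by
    have h1 := hu
    unfold UnitVec at h1
    rw [sum_pi3 (fun f => star (u f) * u f)] at h1
    simp only [Fin.sum_univ_two] at h1
    simp only [star_mul_self_eq_normSq] at h1
    rw [show (![(0:Fin 2),0,0]) = q0 from rfl, show (![(0:Fin 2),0,1]) = qC from rfl,
      show (![(0:Fin 2),1,0]) = qB from rfl, show (![(0:Fin 2),1,1]) = qE from rfl,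
      show (![(1:Fin 2),0,0]) = qA from rfl, show (![(1:Fin 2),0,1]) = qF from rfl,
      show (![(1:Fin 2),1,0]) = qG from rfl, show (![(1:Fin 2),1,1]) = q7 from rfl] at h1
    norm_cast at h1
    linarith
  rw [hFw]
  constructor
  · linarith
  · have hs2 : Complex.normSq (u qE + u qF + u qG)
        ≤ Complex.normSq (u qE) + Complex.normSq (u qF) + Complex.normSq (u qG)
          + Complex.normSq (u q7) + Complex.normSq (u qA + u qB + u qC) := key2
    linarith [Complex.normSq_nonneg (u qA + u qB + u qC),
      Complex.normSq_nonneg (u q0), Complex.normSq_nonneg (u q7)]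

/-- `Fw` of the W-state projector is `-2`. -/
lemma Fw_W : Fw (vecProj wVec) = -2 := by
  have hval : ∀ f : Fin 3 → Fin 2, wVec f
      = if ((f 0 : ℕ) + (f 1 : ℕ) + (f 2 : ℕ)) = 1 then (((Real.sqrt 3)⁻¹ : ℝ) : ℂ) else 0 := by
    intro f; rw [wVec]; rw [Fin.sum_univ_three]
  have hA : wVec qA = (((Real.sqrt 3)⁻¹ : ℝ) : ℂ) := by rw [hval]; norm_num [qA, Matrix.cons_val_two, Matrix.tail_cons, Matrix.head_cons]
  have hB : wVec qB = (((Real.sqrt 3)⁻¹ : ℝ) : ℂ) := by rw [hval]; norm_num [qB, Matrix.cons_val_two, Matrix.tail_cons, Matrix.head_cons]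
  have hC : wVec qC = (((Real.sqrt 3)⁻¹ : ℝ) : ℂ) := by rw [hval]; norm_num [qC, Matrix.cons_val_two, Matrix.tail_cons, Matrix.head_cons]
  have h0 : wVec q0 = 0 := by rw [hval]; norm_num [q0, Matrix.cons_val_two, Matrix.tail_cons, Matrix.head_cons]
  have hE : wVec qE = 0 := by rw [hval]; norm_num [qE, Matrix.cons_val_two, Matrix.tail_cons, Matrix.head_cons]
  have hF : wVec qF = 0 := by rw [hval]; norm_num [qF, Matrix.cons_val_two, Matrix.tail_cons, Matrix.head_cons]
  have hG : wVec qG = 0 := by rw [hval]; norm_num [qG, Matrix.cons_val_two, Matrix.tail_cons, Matrix.head_cons]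
  have hx : ((Real.sqrt 3)⁻¹ : ℝ) * ((Real.sqrt 3)⁻¹ : ℝ) = 1/3 := by
    rw [← mul_inv, Real.mul_self_sqrt (by norm_num : (0:ℝ) ≤ 3)]
    norm_num
  simp only [Fw, vecProj, Matrix.of_apply, hA, hB, hC, h0, hE, hF, hG]
  simp only [Complex.star_def, Complex.conj_ofReal, ← Complex.ofReal_mul, hx]
  simp only [mul_zero, zero_mul, add_zero, zero_add]
  norm_num


/-- Single-qubit components of the product vectors in the optimal decomposition. -/
lemma Ip3 : Complex.I ^ 3 = -Complex.I := by
  rw [pow_succ, Complex.I_sq]; ring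

lemma Ip4 : Complex.I ^ 4 = 1 := by
  rw [pow_succ, Ip3]; simp [Complex.I_mul_I]

lemma Ip5 : Complex.I ^ 5 = Complex.I := by
  rw [pow_succ, Ip4, one_mul]

lemma Ip6 : Complex.I ^ 6 = -1 := by
  rw [pow_succ, Ip5, Complex.I_mul_I]

lemma fin5_cases : ∀ j : Fin 5, j = 0 ∨ j = 1 ∨ j = 2 ∨ j = 3 ∨ j = 4 := by decide

def tComp : Fin 5 → Fin 2 → ℂ :=
  ![![crt/2, 1/2], ![crt/2, Complex.I/2], ![crt/2, -(1/2)], ![crt/2, -(Complex.I/2)], ![0, 1]]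

def sComp : Fin 5 → Fin 2 → ℂ :=
  ![![1/2, crt/2], ![Complex.I/2, crt/2], ![-(1/2), crt/2], ![-(Complex.I/2), crt/2], ![1, 0]]

def tVec (k : Fin 5) : (Fin 3 → Fin 2) → ℂ := fun f => ∏ j, tComp k (f j)
def sVec (k : Fin 5) : (Fin 3 → Fin 2) → ℂ := fun f => ∏ j, sComp k (f j)

def tW : Fin 5 → ℝ := ![2/9, 2/9, 2/9, 2/9, 1/9]
def sW : Fin 5 → ℝ := ![1/9, 1/9, 1/9, 1/9, 5/9]

def sigMat : Matrix (Fin 3 → Fin 2) (Fin 3 → Fin 2) ℂ :=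
  ∑ k, (sW k : ℂ) • vecProj (sVec k)

set_option maxHeartbeats 1000000 in
lemma unit_tVec (k : Fin 5) : UnitVec (tVec k) := by
  unfold UnitVec tVec
  rw [sum_pi3 (fun f => star (∏ j, tComp k (f j)) * ∏ j, tComp k (f j))]
  simp only [Fin.prod_univ_three, Fin.sum_univ_two]
  rcases fin5_cases k with rfl|rfl|rfl|rfl|rfl <;>
    · simp only [tComp, Matrix.cons_val_zero, Matrix.cons_val_one, Matrix.head_cons,
        Matrix.cons_val', Matrix.empty_val', Matrix.cons_val_fin_one, Matrix.cons_val_two,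
        Matrix.cons_val_three, Matrix.cons_val_four, Matrix.tail_cons,
        Complex.star_def, _root_.map_mul, map_div₀, map_neg, _root_.map_one, map_ofNat,
        Complex.conj_ofReal, Complex.conj_I, conj_crt, conj_two]
      ring_nf
      try simp only [crt_sq, crt_p3, crt_p4, crt_p5, crt_p6, Complex.I_sq, Ip3, Ip4, Ip5, Ip6]
      try ring_nf
      try norm_num

set_option maxHeartbeats 1000000 in
lemma unit_sVec (k : Fin 5) : UnitVec (sVec k) := by
  unfold UnitVec sVec
  rw [sum_pi3 (fun f => star (∏ j, sComp k (f j)) * ∏ j, sComp k (f j))]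
  simp only [Fin.prod_univ_three, Fin.sum_univ_two]
  rcases fin5_cases k with rfl|rfl|rfl|rfl|rfl <;>
    · simp only [sComp, Matrix.cons_val_zero, Matrix.cons_val_one, Matrix.head_cons,
        Matrix.cons_val', Matrix.empty_val', Matrix.cons_val_fin_one, Matrix.cons_val_two,
        Matrix.cons_val_three, Matrix.cons_val_four, Matrix.tail_cons,
        Complex.star_def, _root_.map_mul, map_div₀, map_neg, _root_.map_one, map_ofNat,
        Complex.conj_ofReal, Complex.conj_I, conj_crt, conj_two]
      ring_nf
      try simp only [crt_sq, crt_p3, crt_p4, crt_p5, crt_p6, Complex.I_sq, Ip3, Ip4, Ip5, Ip6]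
      try ring_nf
      try norm_num

lemma prod_tVec (k : Fin 5) : IsProdVec (tVec k) := ⟨fun _ => tComp k, fun f => rfl⟩
lemma prod_sVec (k : Fin 5) : IsProdVec (sVec k) := ⟨fun _ => sComp k, fun f => rfl⟩

lemma prod_eval (v : Fin 2 → ℂ) (f : Fin 3 → Fin 2) :
    ∏ j, v (f j) = v 0 ^ (3 - ∑ i, ((f i : ℕ))) * v 1 ^ (∑ i, ((f i : ℕ))) := by
  have h2 : ∀ i : Fin 2, i = 0 ∨ i = 1 := by
    intro i; fin_cases i; exacts [Or.inl rfl, Or.inr rfl]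
  rw [Fin.prod_univ_three, Fin.sum_univ_three]
  rcases h2 (f 0) with h0 | h0 <;> rcases h2 (f 1) with h1 | h1 <;>
    rcases h2 (f 2) with h2' | h2' <;>
    · rw [h0, h1, h2']
      simp only [Fin.val_zero, Fin.val_one, Nat.reduceAdd, Nat.reduceSub]
      ring

lemma sum_f_le (f : Fin 3 → Fin 2) : (∑ i, ((f i : ℕ))) ≤ 3 := by
  rw [Fin.sum_univ_three]
  have a0 := Fin.is_le (f 0)
  have a1 := Fin.is_le (f 1)
  have a2 := Fin.is_le (f 2)
  omega

set_option maxHeartbeats 2000000 in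
lemma main_id :
    ((3 : ℂ))⁻¹ • (vecProj wVec + (2 : ℂ) • sigMat) = ∑ k, (tW k : ℂ) • vecProj (tVec k) := by
  ext f g
  have hf3 := sum_f_le f
  have hg3 := sum_f_le g
  simp only [Matrix.smul_apply, Matrix.add_apply, Matrix.sum_apply, smul_eq_mul,
    vecProj, Matrix.of_apply, sigMat, tVec, sVec, wVec, Fin.sum_univ_five,
    prod_eval, inv_sqrt3]
  set n := ∑ i, ((f i : ℕ)) with hn
  set m := ∑ i, ((g i : ℕ)) with hm
  clear_value n m
  interval_cases n <;> interval_cases m <;>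
    · norm_num
      simp only [tComp, sComp, tW, sW, Matrix.cons_val_zero, Matrix.cons_val_one,
        Matrix.head_cons, Matrix.cons_val', Matrix.empty_val', Matrix.cons_val_fin_one,
        Matrix.cons_val_two, Matrix.cons_val_three, Matrix.cons_val_four, Matrix.tail_cons,
        Complex.star_def, _root_.map_mul, map_pow, map_div₀, map_neg, _root_.map_one,
        map_ofNat, map_zero, Complex.conj_ofReal, Complex.conj_I, conj_crt, conj_two]
      ring_nf
      try simp only [crt_sq, crt_p3, crt_p4, crt_p5, crt_p6, Complex.I_sq, Ip3, Ip4, Ip5, Ip6]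
      try ring_nf
      try norm_num


lemma sW_nonneg : ∀ k, 0 ≤ sW k := by
  intro k; rcases fin5_cases k with rfl|rfl|rfl|rfl|rfl <;> norm_num [sW, Matrix.cons_val_two, Matrix.cons_val_three, Matrix.cons_val_four, Matrix.tail_cons, Matrix.head_cons]

lemma sW_sum : ∑ k, sW k = 1 := by
  rw [Fin.sum_univ_five]; norm_num [sW, Matrix.cons_val_two, Matrix.cons_val_three, Matrix.cons_val_four, Matrix.tail_cons, Matrix.head_cons]

lemma tW_nonneg : ∀ k, 0 ≤ tW k := by
  intro k; rcases fin5_cases k with rfl|rfl|rfl|rfl|rfl <;> norm_num [tW, Matrix.cons_val_two, Matrix.cons_val_three, Matrix.cons_val_four, Matrix.tail_cons, Matrix.head_cons]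

lemma tW_sum : ∑ k, tW k = 1 := by
  rw [Fin.sum_univ_five]; norm_num [tW, Matrix.cons_val_two, Matrix.cons_val_three, Matrix.cons_val_four, Matrix.tail_cons, Matrix.head_cons]

end RWAux

/-- The robustness of the three-qubit W state relative to the fully separable
states equals 2. -/
theorem robustness_W :
    Robustness {ρ | FullySepState (fun _ : Fin 3 => Fin 2) ρ} (vecProj wVec) = 2 := by
  have hmem : (2:ℝ) ∈ {s : ℝ | 0 ≤ s ∧ ∃ σ, IsState σ ∧
      σ ∈ {ρ | FullySepState (fun _ : Fin 3 => Fin 2) ρ} ∧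
      (((1 + s)⁻¹ : ℝ) : ℂ) • (vecProj wVec + (s : ℂ) • σ) ∈
        {ρ | FullySepState (fun _ : Fin 3 => Fin 2) ρ}} := by
    refine ⟨by norm_num, sigMat, ?_, ?_, ?_⟩
    · exact isState_mix sW sVec sW_nonneg sW_sum unit_sVec
    · exact ⟨5, sW, sVec, sW_nonneg, sW_sum, fun k => ⟨unit_sVec k, prod_sVec k⟩, rfl⟩
    · refine ⟨5, tW, tVec, tW_nonneg, tW_sum, fun k => ⟨unit_tVec k, prod_tVec k⟩, ?_⟩
      have e1 : (((1 + (2:ℝ))⁻¹ : ℝ) : ℂ) = ((3 : ℂ))⁻¹ := by norm_num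
      have e2 : (((2:ℝ)) : ℂ) = (2 : ℂ) := by norm_num
      rw [e1, e2]
      exact main_id
  have hlb : ∀ s ∈ {s : ℝ | 0 ≤ s ∧ ∃ σ, IsState σ ∧
      σ ∈ {ρ | FullySepState (fun _ : Fin 3 => Fin 2) ρ} ∧
      (((1 + s)⁻¹ : ℝ) : ℂ) • (vecProj wVec + (s : ℂ) • σ) ∈
        {ρ | FullySepState (fun _ : Fin 3 => Fin 2) ρ}}, (2:ℝ) ≤ s := by
    rintro s ⟨hs0, σ, _, hσ, hmix⟩
    obtain ⟨m1, w1, u1, hw10, hw11, hu1, hσeq⟩ := hσ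
    obtain ⟨m2, w2, u2, hw20, hw21, hu2, hmeq⟩ := hmix
    have hFσ : Fw σ ≤ 1 := by
      rw [hσeq, Fw_sum]
      calc ∑ k, Fw ((w1 k : ℂ) • vecProj (u1 k))
          = ∑ k, w1 k * Fw (vecProj (u1 k)) :=
            Finset.sum_congr rfl fun k _ => Fw_smul _ _
        _ ≤ ∑ k, w1 k * 1 := Finset.sum_le_sum fun k _ =>
            mul_le_mul_of_nonneg_left (Fw_prod_bounds _ (hu1 k).1 (hu1 k).2).2 (hw10 k)
        _ = 1 := by simpa using hw11
    have hFmix : 0 ≤ Fw ((((1 + s)⁻¹ : ℝ) : ℂ) • (vecProj wVec + (s : ℂ) • σ)) := by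
      rw [hmeq, Fw_sum]
      refine Finset.sum_nonneg fun k _ => ?_
      rw [Fw_smul]
      exact mul_nonneg (hw20 k) (Fw_prod_bounds _ (hu2 k).1 (hu2 k).2).1
    have hcomp : Fw ((((1 + s)⁻¹ : ℝ) : ℂ) • (vecProj wVec + (s : ℂ) • σ))
        = (1 + s)⁻¹ * (-2 + s * Fw σ) := by
      rw [Fw_smul, Fw_add, Fw_W, Fw_smul]
      try ring
    rw [hcomp] at hFmix
    have h1s : (0:ℝ) < 1 + s := by linarith
    have hX : 0 ≤ -2 + s * Fw σ := by
      by_contra hneg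
      push_neg at hneg
      have : (1 + s)⁻¹ * (-2 + s * Fw σ) < 0 :=
        mul_neg_of_pos_of_neg (by positivity) hneg
      linarith
    have hss : s * Fw σ ≤ s * 1 := mul_le_mul_of_nonneg_left hFσ hs0
    linarith
  unfold Robustness
  exact le_antisymm (csInf_le ⟨2, hlb⟩ hmem) (le_csInf ⟨2, hmem⟩ hlb)
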